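/- Let A and A' be finite-dimensional Hopf algebras over a field k and suppose they are gauge equivalent, i.e. there exist a normalized twist J for A and a Hopf algebra isomorphism σ : A' → A^J. Then dim_k(A'^⊥) = dim_k(A^⊥); that is, the dimension of the Killing radical of A is a gauge invariant of A. -/

import Mathlib

open TensorProduct

noncomputable section

variable (k : Type*) [Field k] (A : Type*) [Ring A] [HopfAlgebra k A]

/-- `PposGen D n a = a₍₁₎ ⋯ a₍ₙ₎` (with value `ε(a)1` for `n = 0`), built from a given
comultiplication-like map `D`. -/
def PposGen (D : A →ₗ[k] A ⊗[k] A) : ℕ → (A →ₗ[k] A)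
  | 0 => Algebra.linearMap k A ∘ₗ Coalgebra.counit
  | n+1 => LinearMap.mul' k A ∘ₗ TensorProduct.map LinearMap.id (PposGen D n) ∘ₗ D

/-- Reversed products of Sweedler components: `QposGen D n a = a₍ₙ₎ ⋯ a₍₁₎`. -/
def QposGen (D : A →ₗ[k] A ⊗[k] A) : ℕ → (A →ₗ[k] A)
  | 0 => Algebra.linearMap k A ∘ₗ Coalgebra.counit
  | n+1 => LinearMap.mul' k A ∘ₗ (TensorProduct.comm k A A).toLinearMap
      ∘ₗ TensorProduct.map LinearMap.id (QposGen D n) ∘ₗ D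

/-- The `n`-th Sweedler power map associated to a comultiplication-like map `D` and an
antipode-like map `S'`: for `n ≥ 0` it is `a ↦ a₍₁₎ ⋯ a₍ₙ₎`, and for `n ≤ -1` it is
`a ↦ S'(a₍₋ₙ₎ ⋯ a₍₁₎)`. -/
def PGen (D : A →ₗ[k] A ⊗[k] A) (S' : A →ₗ[k] A) (n : ℤ) : A →ₗ[k] A :=
  if 0 ≤ n then PposGen k A D n.toNat else S' ∘ₗ QposGen k A D (-n).toNat

/-- The `n`-th Sweedler power map `P_n` of the Hopf algebra `A`. -/
def SweedlerP (n : ℤ) : A →ₗ[k] A :=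
  PGen k A Coalgebra.comul (HopfAlgebra.antipode (R := k)) n

/-- `Λ` is a left integral in `A`: `a Λ = ε(a) Λ` for all `a`. -/
def IsLeftIntegral (Λ : A) : Prop := ∀ a : A, a * Λ = Coalgebra.counit (R := k) a • Λ

/-- `α ∈ A*` is the distinguished group-like element associated to the left integral `Λ`:
`Λ a = α(a) Λ` for all `a`. -/
def IsDistinguished (Λ : A) (α : A →ₗ[k] k) : Prop := ∀ a : A, Λ * a = α a • Λ

/-- `a† = a₍₁₎ α(S⁻¹(a₍₂₎))`, as a linear map in `a` (here `Sinv` is the inverse of the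
antipode and `α` is the distinguished group-like element). -/
def dagger (α : A →ₗ[k] k) (Sinv : A →ₗ[k] A) : A →ₗ[k] A :=
  (TensorProduct.rid k A).toLinearMap ∘ₗ
    TensorProduct.map LinearMap.id (α ∘ₗ Sinv) ∘ₗ Coalgebra.comul

/-- A normalized twist `J` for the Hopf algebra `A`: an invertible element of `A ⊗ A`
(with specified inverse) satisfying `(ε ⊗ id)(J) = (id ⊗ ε)(J) = 1` and the cocycle
condition `(Δ ⊗ id)(J)(J ⊗ 1) = (id ⊗ Δ)(J)(1 ⊗ J)`. -/
structure NormalizedTwist where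
  J : A ⊗[k] A
  Jinv : A ⊗[k] A
  mul_inv : J * Jinv = 1
  inv_mul : Jinv * J = 1
  counit_id : (TensorProduct.lid k A) ((TensorProduct.map Coalgebra.counit LinearMap.id) J) = 1
  id_counit : (TensorProduct.rid k A) ((TensorProduct.map LinearMap.id Coalgebra.counit) J) = 1
  cocycle : (Algebra.TensorProduct.assoc k k k A A A)
      ((TensorProduct.map Coalgebra.comul LinearMap.id) J * (J ⊗ₜ[k] (1 : A)))
    = (TensorProduct.map LinearMap.id Coalgebra.comul) J * ((1 : A) ⊗ₜ[k] J)

variable {k A} (t : NormalizedTwist k A)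

/-- `Q_J = S(J⁽¹⁾) J⁽²⁾`. -/
def NormalizedTwist.QJ : A :=
  LinearMap.mul' k A ((TensorProduct.map (HopfAlgebra.antipode (R := k)) LinearMap.id) t.J)

/-- `Q_J⁻¹ = J⁻⁽¹⁾ S(J⁻⁽²⁾)`. -/
def NormalizedTwist.QJinv : A :=
  LinearMap.mul' k A ((TensorProduct.map LinearMap.id (HopfAlgebra.antipode (R := k))) t.Jinv)

/-- The twisted comultiplication `Δᴶ(a) = J⁻¹ Δ(a) J`. -/
def NormalizedTwist.comulJ : A →ₗ[k] A ⊗[k] A :=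
  LinearMap.mulLeft k t.Jinv ∘ₗ LinearMap.mulRight k t.J ∘ₗ Coalgebra.comul

/-- The twisted antipode `Sᴶ(a) = Q_J⁻¹ S(a) Q_J`. -/
def NormalizedTwist.SJ : A →ₗ[k] A :=
  LinearMap.mulLeft k t.QJinv ∘ₗ LinearMap.mulRight k t.QJ ∘ₗ HopfAlgebra.antipode (R := k)

/-- The `n`-th Sweedler power map of the twisted Hopf algebra `A^J`. -/
def NormalizedTwist.PJ (n : ℤ) : A →ₗ[k] A := PGen k A t.comulJ t.SJ n

/-- `T = J⁻⁽¹⁾ α(J⁻⁽²⁾)`. -/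
def NormalizedTwist.Telt (α : A →ₗ[k] k) : A :=
  (TensorProduct.rid k A) ((TensorProduct.map LinearMap.id α) t.Jinv)

/-- `R = α(J⁻⁽¹⁾) J⁻⁽²⁾`. -/
def NormalizedTwist.Relt (α : A →ₗ[k] k) : A :=
  (TensorProduct.lid k A) ((TensorProduct.map α LinearMap.id) t.Jinv)

/-- `R⁻¹ = α(J⁽¹⁾) J⁽²⁾`. -/
def NormalizedTwist.Rinv (α : A →ₗ[k] k) : A :=
  (TensorProduct.lid k A) ((TensorProduct.map α LinearMap.id) t.J)

end

noncomputable section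

variable (k : Type*) [Field k] (A : Type*) [Ring A] [HopfAlgebra k A]
variable (A' : Type*) [Ring A'] [HopfAlgebra k A']

/-- `σ : A' ≃ₐ[k] A` is an isomorphism of Hopf algebras from `A'` onto the twisted Hopf
algebra `A^J` (equivalently, a bialgebra isomorphism: an algebra isomorphism onto
`A^J = A` as an algebra which intertwines the counits and the twisted comultiplication). -/
structure IsGaugeIso (t : NormalizedTwist k A) (σ : A' ≃ₐ[k] A) : Prop where
  counit_comp : ∀ a : A', Coalgebra.counit (R := k) (σ a) = Coalgebra.counit (R := k) a
  comul_comp : ∀ a : A',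
    t.comulJ (σ a) = TensorProduct.map σ.toLinearMap σ.toLinearMap (Coalgebra.comul a)

/-- Evaluation of a polynomial `ψ ∈ k[X₁, …, X_s]` at elements `b₁, …, b_s` of a
(possibly noncommutative) algebra, where each monomial `X₁^{k₁} ⋯ X_s^{k_s}` is evaluated
in the fixed order `b₁^{k₁} ⋯ b_s^{k_s}`. -/
def ncEval {s : ℕ} (ψ : MvPolynomial (Fin s) k) (b : Fin s → A) : A :=
  ∑ d ∈ ψ.support, ψ.coeff d • (List.ofFn fun i => b i ^ d i).prod

end

noncomputable section

variable (k : Type*) [Field k] (A : Type*) [Ring A] [HopfAlgebra k A]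

/-- The adjoint representation associated to a comultiplication-like map `D` and an
antipode-like map `S'`: `(ad a)(b) = a₍₁₎ b S'(a₍₂₎)` (Sweedler components taken with
respect to `D`). -/
def adGen (D : A →ₗ[k] A ⊗[k] A) (S' : A →ₗ[k] A) : A →ₗ[k] A →ₗ[k] A :=
  TensorProduct.lift (LinearMap.mk₂ k
    (fun x y => LinearMap.mulLeft k x ∘ₗ LinearMap.mulRight k (S' y))
    (fun x x' y => by ext b; simp [add_mul])
    (fun c x y => by ext b; simp [smul_mul_assoc])
    (fun x y y' => by ext b; simp [mul_add])
    (fun c x y => by ext b; simp [mul_smul_comm])) ∘ₗ D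

/-- The adjoint representation `(ad a)(b) = a₍₁₎ b S(a₍₂₎)` of the Hopf algebra `A`. -/
def adRep : A →ₗ[k] A →ₗ[k] A :=
  adGen k A (Coalgebra.comul (R := k)) (HopfAlgebra.antipode (R := k))

/-- The Killing form `(a, b) = tr(ad(ab))` associated to `D` and `S'`. -/
def killingForm' (D : A →ₗ[k] A ⊗[k] A) (S' : A →ₗ[k] A) (a b : A) : k :=
  LinearMap.trace k A (adGen k A D S' (a * b))

/-- The Killing radical `A^⊥ = {a ∈ A ∣ (a, b) = 0 for all b ∈ A}`, as a `k`-submodule. -/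
def killingRad (D : A →ₗ[k] A ⊗[k] A) (S' : A →ₗ[k] A) : Submodule k A where
  carrier := {a : A | ∀ b : A, killingForm' k A D S' a b = 0}
  add_mem' := by
    intro a a' ha ha' b
    simp only [killingForm', Set.mem_setOf_eq] at ha ha' ⊢
    rw [add_mul, map_add, map_add, ha b, ha' b, add_zero]
  zero_mem' := by
    intro b
    simp [killingForm']
  smul_mem' := by
    intro c a ha b
    have := ha b
    simp only [killingForm'] at *
    rw [smul_mul_assoc, map_smul, map_smul, this, smul_zero]

end


/-! ### Auxiliary development for the gauge invariance of the Killing radical. -/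

noncomputable section GaugeAux

open TensorProduct LinearMap

section MapMul
variable {k : Type*} [Field k]

theorem GaugeAux.map_mul_of {B C B' C' : Type*} [Ring B] [Algebra k B] [Ring C] [Algebra k C]
    [Ring B'] [Algebra k B'] [Ring C'] [Algebra k C']
    (f : B →ₗ[k] B') (g : C →ₗ[k] C')
    (hf : ∀ x y, f (x * y) = f x * f y) (hg : ∀ x y, g (x * y) = g x * g y)
    (u v : B ⊗[k] C) :
    TensorProduct.map f g (u * v) = TensorProduct.map f g u * TensorProduct.map f g v := by
  induction u using TensorProduct.induction_on with
  | zero => simp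
  | tmul a b =>
    induction v using TensorProduct.induction_on with
    | zero => simp
    | tmul c d => simp [Algebra.TensorProduct.tmul_mul_tmul, hf, hg]
    | add x y hx hy => simp only [mul_add, map_add, hx, hy]
  | add x y hx hy => simp only [add_mul, map_add, hx, hy]
end MapMul

section Conv
variable {k : Type*} [Field k] {C : Type*} [AddCommGroup C] [Module k C]
  {B : Type*} [Ring B] [Algebra k B]
variable (Dc : C →ₗ[k] C ⊗[k] C) (ec : C →ₗ[k] k)

/-- Convolution product on `Hom(C, B)`. -/
noncomputable def convl (f g : C →ₗ[k] B) : C →ₗ[k] B :=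
  LinearMap.mul' k B ∘ₗ TensorProduct.map f g ∘ₗ Dc

theorem convl_assoc
    (hco : (TensorProduct.assoc k C C C).toLinearMap ∘ₗ Dc.rTensor C ∘ₗ Dc = Dc.lTensor C ∘ₗ Dc)
    (f g h : C →ₗ[k] B) :
    convl Dc (convl Dc f g) h = convl Dc f (convl Dc g h) := by
  have e1 : TensorProduct.map (LinearMap.mul' k B ∘ₗ TensorProduct.map f g) h ∘ₗ Dc.rTensor C
      = TensorProduct.map (LinearMap.mul' k B ∘ₗ TensorProduct.map f g ∘ₗ Dc) h := by
    rw [LinearMap.rTensor, ← TensorProduct.map_comp, LinearMap.comp_id, LinearMap.comp_assoc]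
  have e2 : TensorProduct.map f (LinearMap.mul' k B ∘ₗ TensorProduct.map g h) ∘ₗ Dc.lTensor C
      = TensorProduct.map f (LinearMap.mul' k B ∘ₗ TensorProduct.map g h ∘ₗ Dc) := by
    rw [LinearMap.lTensor, ← TensorProduct.map_comp, LinearMap.comp_id, LinearMap.comp_assoc]
  have key : LinearMap.mul' k B ∘ₗ TensorProduct.map (LinearMap.mul' k B ∘ₗ TensorProduct.map f g) h
      = (LinearMap.mul' k B ∘ₗ TensorProduct.map f (LinearMap.mul' k B ∘ₗ TensorProduct.map g h))
        ∘ₗ (TensorProduct.assoc k C C C).toLinearMap := by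
    apply TensorProduct.ext_threefold
    intro a b c
    simp [mul_assoc]
  have A1 : convl Dc (convl Dc f g) h
      = (LinearMap.mul' k B ∘ₗ TensorProduct.map (LinearMap.mul' k B ∘ₗ TensorProduct.map f g) h)
        ∘ₗ (Dc.rTensor C ∘ₗ Dc) := by
    simp only [convl]
    rw [← e1]
    simp only [LinearMap.comp_assoc]
  have A2 : convl Dc f (convl Dc g h)
      = (LinearMap.mul' k B ∘ₗ TensorProduct.map f (LinearMap.mul' k B ∘ₗ TensorProduct.map g h))
        ∘ₗ (Dc.lTensor C ∘ₗ Dc) := by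
    simp only [convl]
    rw [← e2]
    simp only [LinearMap.comp_assoc]
  rw [A1, A2, ← hco, key]
  simp only [LinearMap.comp_assoc]

theorem convl_unit_right
    (hlc : ec.lTensor C ∘ₗ Dc = (TensorProduct.mk k C k).flip 1)
    (f : C →ₗ[k] B) : convl Dc f (Algebra.linearMap k B ∘ₗ ec) = f := by
  have sub : ∀ w : C ⊗[k] C,
      LinearMap.mul' k B (TensorProduct.map f (Algebra.linearMap k B ∘ₗ ec) w)
        = f ((TensorProduct.rid k C) ((ec.lTensor C) w)) := by
    intro w
    induction w using TensorProduct.induction_on with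
    | zero => simp
    | tmul a b =>
      simp only [TensorProduct.map_tmul, LinearMap.comp_apply, Algebra.linearMap_apply,
        LinearMap.mul'_apply, LinearMap.lTensor_tmul, TensorProduct.rid_tmul, map_smul,
        Algebra.smul_def]
      exact (Algebra.commutes _ _).symm
    | add x y hx hy => simp only [map_add, hx, hy]
  ext x
  have h2 : (ec.lTensor C) (Dc x) = x ⊗ₜ[k] (1 : k) := LinearMap.congr_fun hlc x
  simp only [convl, LinearMap.comp_apply, sub, h2]
  simp

theorem convl_unit_left
    (hrc : ec.rTensor C ∘ₗ Dc = TensorProduct.mk k k C 1)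
    (f : C →ₗ[k] B) : convl Dc (Algebra.linearMap k B ∘ₗ ec) f = f := by
  have sub : ∀ w : C ⊗[k] C,
      LinearMap.mul' k B (TensorProduct.map (Algebra.linearMap k B ∘ₗ ec) f w)
        = f ((TensorProduct.lid k C) ((ec.rTensor C) w)) := by
    intro w
    induction w using TensorProduct.induction_on with
    | zero => simp
    | tmul a b => simp [Algebra.smul_def]
    | add x y hx hy => simp only [map_add, hx, hy]
  ext x
  have h2 : (ec.rTensor C) (Dc x) = (1 : k) ⊗ₜ[k] x := LinearMap.congr_fun hrc x
  simp only [convl, LinearMap.comp_apply, sub, h2]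
  simp

theorem convl_inv_unique
    (hco : (TensorProduct.assoc k C C C).toLinearMap ∘ₗ Dc.rTensor C ∘ₗ Dc = Dc.lTensor C ∘ₗ Dc)
    (hrc : ec.rTensor C ∘ₗ Dc = TensorProduct.mk k k C 1)
    (hlc : ec.lTensor C ∘ₗ Dc = (TensorProduct.mk k C k).flip 1)
    {f g h : C →ₗ[k] B}
    (hgf : convl Dc g f = Algebra.linearMap k B ∘ₗ ec)
    (hfh : convl Dc f h = Algebra.linearMap k B ∘ₗ ec) : g = h := by
  have : convl Dc g (convl Dc f h) = convl Dc (convl Dc g f) h := (convl_assoc Dc hco g f h).symm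
  rw [hgf, hfh, convl_unit_right Dc ec hlc, convl_unit_left Dc ec hrc] at this
  exact this
end Conv


section HopfBasic
variable {k : Type*} [Field k] {A : Type*} [Ring A] [HopfAlgebra k A]

local notation "Δ" => Coalgebra.comul (R := k) (A := A)
local notation "ε" => Coalgebra.counit (R := k) (A := A)
local notation "S" => HopfAlgebra.antipode (R := k) (A := A)

theorem map_comp_left {M N P Q : Type*} [AddCommGroup M] [AddCommGroup N] [AddCommGroup P]
    [AddCommGroup Q] [Module k M] [Module k N] [Module k P] [Module k Q]
    (f : N →ₗ[k] P) (g : M →ₗ[k] N) :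
    TensorProduct.map (f ∘ₗ g) (LinearMap.id (R := k) (M := Q))
      = TensorProduct.map f LinearMap.id ∘ₗ TensorProduct.map g LinearMap.id := by
  rw [← TensorProduct.map_comp, LinearMap.id_comp]

theorem map_comp_right {M N P Q : Type*} [AddCommGroup M] [AddCommGroup N] [AddCommGroup P]
    [AddCommGroup Q] [Module k M] [Module k N] [Module k P] [Module k Q]
    (f : N →ₗ[k] P) (g : M →ₗ[k] N) :
    TensorProduct.map (LinearMap.id (R := k) (M := Q)) (f ∘ₗ g)
      = TensorProduct.map LinearMap.id f ∘ₗ TensorProduct.map LinearMap.id g := by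
  rw [← TensorProduct.map_comp, LinearMap.id_comp]

variable (k A) in
noncomputable def D2 : A ⊗[k] A →ₗ[k] (A ⊗[k] A) ⊗[k] (A ⊗[k] A) :=
  (TensorProduct.tensorTensorTensorComm k A A A A).toLinearMap ∘ₗ
    TensorProduct.map Coalgebra.comul Coalgebra.comul
variable (k A) in
noncomputable def E2 : A ⊗[k] A →ₗ[k] k :=
  LinearMap.mul' k k ∘ₗ TensorProduct.map Coalgebra.counit Coalgebra.counit
theorem D2_coassoc :
    (TensorProduct.assoc k (A ⊗[k] A) (A ⊗[k] A) (A ⊗[k] A)).toLinearMap ∘ₗ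
      (D2 k A).rTensor (A ⊗[k] A) ∘ₗ D2 k A
    = (D2 k A).lTensor (A ⊗[k] A) ∘ₗ D2 k A := by
  have nat1 : TensorProduct.map (TensorProduct.map (Δ) (Δ)) (LinearMap.id (R := k) (M := A ⊗[k] A))
        ∘ₗ (tensorTensorTensorComm k A A A A).toLinearMap
      = (tensorTensorTensorComm k (A ⊗[k] A) A (A ⊗[k] A) A).toLinearMap
        ∘ₗ TensorProduct.map (TensorProduct.map (Δ) LinearMap.id)
            (TensorProduct.map (Δ) LinearMap.id) := by
    ext; simp
  have nat2 : TensorProduct.map (LinearMap.id (R := k) (M := A ⊗[k] A)) (TensorProduct.map (Δ) (Δ))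
        ∘ₗ (tensorTensorTensorComm k A A A A).toLinearMap
      = (tensorTensorTensorComm k A (A ⊗[k] A) A (A ⊗[k] A)).toLinearMap
        ∘ₗ TensorProduct.map (TensorProduct.map LinearMap.id (Δ))
            (TensorProduct.map LinearMap.id (Δ)) := by
    ext; simp
  have coA : TensorProduct.map LinearMap.id (Δ) ∘ₗ (Δ)
      = (TensorProduct.assoc k A A A).toLinearMap
          ∘ₗ TensorProduct.map (Δ) LinearMap.id ∘ₗ (Δ) := by
    have h := Coalgebra.coassoc (R := k) (A := A)
    rw [← LinearMap.comp_assoc]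
    exact h.symm
  have L : (D2 k A).rTensor (A ⊗[k] A) ∘ₗ D2 k A
      = TensorProduct.map (tensorTensorTensorComm k A A A A).toLinearMap LinearMap.id
        ∘ₗ (tensorTensorTensorComm k (A ⊗[k] A) A (A ⊗[k] A) A).toLinearMap
        ∘ₗ TensorProduct.map (TensorProduct.map (Δ) LinearMap.id ∘ₗ (Δ))
            (TensorProduct.map (Δ) LinearMap.id ∘ₗ (Δ)) := by
    show TensorProduct.map (D2 k A) LinearMap.id ∘ₗ D2 k A = _
    simp only [D2, map_comp_left, LinearMap.comp_assoc]
    rw [show TensorProduct.map (TensorProduct.map (Δ) (Δ)) (LinearMap.id (R := k) (M := A ⊗[k] A))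
          ∘ₗ ((tensorTensorTensorComm k A A A A).toLinearMap
            ∘ₗ TensorProduct.map (Δ) (Δ))
        = (TensorProduct.map (TensorProduct.map (Δ) (Δ)) (LinearMap.id (R := k) (M := A ⊗[k] A))
          ∘ₗ (tensorTensorTensorComm k A A A A).toLinearMap)
            ∘ₗ TensorProduct.map (Δ) (Δ) from (LinearMap.comp_assoc _ _ _).symm]
    rw [nat1]
    simp only [LinearMap.comp_assoc]
    rw [← TensorProduct.map_comp]
  have R : (D2 k A).lTensor (A ⊗[k] A) ∘ₗ D2 k A
      = TensorProduct.map LinearMap.id (tensorTensorTensorComm k A A A A).toLinearMap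
        ∘ₗ (tensorTensorTensorComm k A (A ⊗[k] A) A (A ⊗[k] A)).toLinearMap
        ∘ₗ TensorProduct.map (TensorProduct.assoc k A A A).toLinearMap
            (TensorProduct.assoc k A A A).toLinearMap
        ∘ₗ TensorProduct.map (TensorProduct.map (Δ) LinearMap.id ∘ₗ (Δ))
            (TensorProduct.map (Δ) LinearMap.id ∘ₗ (Δ)) := by
    show TensorProduct.map LinearMap.id (D2 k A) ∘ₗ D2 k A = _
    simp only [D2, map_comp_right, LinearMap.comp_assoc]
    rw [show TensorProduct.map (LinearMap.id (R := k) (M := A ⊗[k] A)) (TensorProduct.map (Δ) (Δ))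
          ∘ₗ ((tensorTensorTensorComm k A A A A).toLinearMap
            ∘ₗ TensorProduct.map (Δ) (Δ))
        = (TensorProduct.map (LinearMap.id (R := k) (M := A ⊗[k] A)) (TensorProduct.map (Δ) (Δ))
          ∘ₗ (tensorTensorTensorComm k A A A A).toLinearMap)
            ∘ₗ TensorProduct.map (Δ) (Δ) from (LinearMap.comp_assoc _ _ _).symm]
    rw [nat2]
    simp only [LinearMap.comp_assoc]
    rw [← TensorProduct.map_comp, coA, TensorProduct.map_comp]
  rw [L, R]
  simp only [← LinearMap.comp_assoc]
  congr 1
  ext; simp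


set_option synthInstance.maxHeartbeats 1000000 in
theorem E2_rTensor_D2 :
    (E2 k A).rTensor (A ⊗[k] A) ∘ₗ D2 k A = TensorProduct.mk k k (A ⊗[k] A) 1 := by
  have sub : ∀ u v : A ⊗[k] A,
      (E2 k A).rTensor (A ⊗[k] A) ((tensorTensorTensorComm k A A A A) (u ⊗ₜ[k] v))
        = TensorProduct.map (LinearMap.mul' k k) LinearMap.id
            ((tensorTensorTensorComm k k A k A) ((LinearMap.rTensor A (Coalgebra.counit (R := k)) u) ⊗ₜ[k] (LinearMap.rTensor A (Coalgebra.counit (R := k)) v))) := by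
    intro u v
    induction u using TensorProduct.induction_on with
    | zero => simp
    | tmul x y =>
      induction v using TensorProduct.induction_on with
      | zero => simp
      | tmul p q => rfl
      | add v₁ v₂ h1 h2 => simp only [TensorProduct.tmul_add, map_add, h1, h2]
    | add u₁ u₂ h1 h2 => simp only [TensorProduct.add_tmul, map_add, h1, h2]
  apply TensorProduct.ext'
  intro a b
  have h1 : LinearMap.rTensor A (Coalgebra.counit (R := k)) (Δ a) = (1 : k) ⊗ₜ[k] a := Coalgebra.rTensor_counit_comul a
  have h2 : LinearMap.rTensor A (Coalgebra.counit (R := k)) (Δ b) = (1 : k) ⊗ₜ[k] b := Coalgebra.rTensor_counit_comul b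
  simp only [D2, LinearMap.comp_apply, TensorProduct.map_tmul,
    LinearEquiv.coe_coe, sub, h1, h2]
  simp

set_option synthInstance.maxHeartbeats 1000000 in
theorem E2_lTensor_D2 :
    (E2 k A).lTensor (A ⊗[k] A) ∘ₗ D2 k A = (TensorProduct.mk k (A ⊗[k] A) k).flip 1 := by
  have sub : ∀ u v : A ⊗[k] A,
      (E2 k A).lTensor (A ⊗[k] A) ((tensorTensorTensorComm k A A A A) (u ⊗ₜ[k] v))
        = TensorProduct.map LinearMap.id (LinearMap.mul' k k)
            ((tensorTensorTensorComm k A k A k) ((LinearMap.lTensor A (Coalgebra.counit (R := k)) u) ⊗ₜ[k] (LinearMap.lTensor A (Coalgebra.counit (R := k)) v))) := by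
    intro u v
    induction u using TensorProduct.induction_on with
    | zero => simp
    | tmul x y =>
      induction v using TensorProduct.induction_on with
      | zero => simp
      | tmul p q => rfl
      | add v₁ v₂ h1 h2 => simp only [TensorProduct.tmul_add, map_add, h1, h2]
    | add u₁ u₂ h1 h2 => simp only [TensorProduct.add_tmul, map_add, h1, h2]
  apply TensorProduct.ext'
  intro a b
  have h1 : LinearMap.lTensor A (Coalgebra.counit (R := k)) (Δ a) = a ⊗ₜ[k] (1 : k) := Coalgebra.lTensor_counit_comul a
  have h2 : LinearMap.lTensor A (Coalgebra.counit (R := k)) (Δ b) = b ⊗ₜ[k] (1 : k) := Coalgebra.lTensor_counit_comul b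
  simp only [D2, LinearMap.comp_apply, TensorProduct.map_tmul,
    LinearEquiv.coe_coe, sub, h1, h2]
  simp


-- new material
theorem my_antipode_one : (HopfAlgebra.antipode (R := k) (A := A)) 1 = 1 := by
  have := HopfAlgebra.mul_antipode_rTensor_comul_apply (R := k) (a := (1 : A))
  rw [Bialgebra.comul_one, Algebra.TensorProduct.one_def] at this
  simpa using this

variable (k A) in
noncomputable def phiS : A ⊗[k] A →ₗ[k] A :=
  LinearMap.mul' k A ∘ₗ TensorProduct.map (HopfAlgebra.antipode (R := k)) LinearMap.id

variable (k A) in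
noncomputable def thetaS : A ⊗[k] A →ₗ[k] A :=
  LinearMap.mul' k A ∘ₗ TensorProduct.map LinearMap.id (HopfAlgebra.antipode (R := k))

@[simp] theorem phiS_tmul (x y : A) : phiS k A (x ⊗ₜ[k] y) = S x * y := rfl
@[simp] theorem thetaS_tmul (x y : A) : thetaS k A (x ⊗ₜ[k] y) = x * S y := rfl

theorem phiS_comul (a : A) : phiS k A (Δ a) = ε a • (1 : A) := by
  have := HopfAlgebra.mul_antipode_rTensor_comul_apply (R := k) (a := a)
  rw [LinearMap.rTensor] at this
  rw [phiS, LinearMap.comp_apply, this, Algebra.smul_def, mul_one]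

theorem thetaS_comul (a : A) : thetaS k A (Δ a) = ε a • (1 : A) := by
  have := HopfAlgebra.mul_antipode_lTensor_comul_apply (R := k) (a := a)
  rw [LinearMap.lTensor] at this
  rw [thetaS, LinearMap.comp_apply, this, Algebra.smul_def, mul_one]

variable (k A) in
noncomputable def Gmap : A ⊗[k] A →ₗ[k] Module.End k A :=
  TensorProduct.lift (LinearMap.mk₂ k
    (fun x y => LinearMap.mulLeft k ((HopfAlgebra.antipode (R := k)) x) ∘ₗ LinearMap.mulRight k y)
    (fun x x' y => by ext b; simp [add_mul])
    (fun c x y => by ext b; simp [smul_mul_assoc])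
    (fun x y y' => by ext b; simp [mul_add])
    (fun c x y => by ext b; simp [mul_smul_comm]))

@[simp] theorem Gmap_tmul_apply (x y b : A) : Gmap k A (x ⊗ₜ[k] y) b = S x * (b * y) := rfl

theorem Gmap_apply_one (w : A ⊗[k] A) : Gmap k A w 1 = phiS k A w := by
  induction w using TensorProduct.induction_on with
  | zero => simp
  | tmul x y => simp
  | add u v hu hv => simp only [map_add, LinearMap.add_apply, hu, hv]

theorem antipode_mul_rev (a b : A) :
    (HopfAlgebra.antipode (R := k)) (a * b) = S b * S a := by
  set mulLin := LinearMap.mul' k A with hm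
  set N : A ⊗[k] A →ₗ[k] A := HopfAlgebra.antipode (R := k) ∘ₗ mulLin with hN
  set T : A ⊗[k] A →ₗ[k] A :=
    mulLin ∘ₗ TensorProduct.map (HopfAlgebra.antipode (R := k)) (HopfAlgebra.antipode (R := k))
      ∘ₗ (TensorProduct.comm k A A).toLinearMap with hT
  have subT : ∀ u v : A ⊗[k] A,
      mulLin (TensorProduct.map T mulLin ((tensorTensorTensorComm k A A A A) (u ⊗ₜ[k] v)))
        = Gmap k A v (phiS k A u) := by
    intro u v
    induction u using TensorProduct.induction_on with
    | zero => simp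
    | tmul x y =>
      induction v using TensorProduct.induction_on with
      | zero => simp
      | tmul p q =>
        simp only [tensorTensorTensorComm_tmul, TensorProduct.map_tmul, hT, hm,
          LinearMap.comp_apply, LinearEquiv.coe_coe, TensorProduct.comm_tmul,
          LinearMap.mul'_apply, Gmap_tmul_apply, phiS_tmul]
        simp [mul_assoc]
      | add v₁ v₂ h1 h2 => simp only [TensorProduct.tmul_add, map_add, h1, h2,
          LinearMap.add_apply]
    | add u₁ u₂ h1 h2 => simp only [TensorProduct.add_tmul, map_add, h1, h2, map_add]
  have subM : ∀ u v : A ⊗[k] A,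
      TensorProduct.map mulLin mulLin ((tensorTensorTensorComm k A A A A) (u ⊗ₜ[k] v))
        = u * v := by
    intro u v
    induction u using TensorProduct.induction_on with
    | zero => simp
    | tmul x y =>
      induction v using TensorProduct.induction_on with
      | zero => simp
      | tmul p q => simp [hm, Algebra.TensorProduct.tmul_mul_tmul]
      | add v₁ v₂ h1 h2 => simp only [TensorProduct.tmul_add, map_add, h1, h2, mul_add]
    | add u₁ u₂ h1 h2 => simp only [TensorProduct.add_tmul, map_add, h1, h2, add_mul]
  have hgf : convl (D2 k A) T mulLin = Algebra.linearMap k A ∘ₗ E2 k A := by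
    apply TensorProduct.ext'
    intro x y
    have : convl (D2 k A) T mulLin (x ⊗ₜ[k] y)
        = mulLin (TensorProduct.map T mulLin
            ((tensorTensorTensorComm k A A A A) ((Δ x) ⊗ₜ[k] (Δ y)))) := rfl
    rw [this, subT, phiS_comul, map_smul, Gmap_apply_one, phiS_comul]
    simp [E2, smul_smul, Algebra.smul_def]
  have hfh : convl (D2 k A) mulLin N = Algebra.linearMap k A ∘ₗ E2 k A := by
    apply TensorProduct.ext'
    intro x y
    have e1 : TensorProduct.map mulLin N
        = TensorProduct.map LinearMap.id (HopfAlgebra.antipode (R := k)) ∘ₗ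
            TensorProduct.map mulLin mulLin := by
      rw [← TensorProduct.map_comp, LinearMap.id_comp]
    have : convl (D2 k A) mulLin N (x ⊗ₜ[k] y)
        = mulLin (TensorProduct.map mulLin N
            ((tensorTensorTensorComm k A A A A) ((Δ x) ⊗ₜ[k] (Δ y)))) := rfl
    rw [this, e1, LinearMap.comp_apply, subM, ← Bialgebra.comul_mul]
    have : mulLin (TensorProduct.map LinearMap.id (HopfAlgebra.antipode (R := k)) (Δ (x * y)))
        = thetaS k A (Δ (x * y)) := rfl
    rw [this, thetaS_comul]
    simp [E2, Algebra.smul_def]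
  have key : T = N :=
    convl_inv_unique (D2 k A) (E2 k A) D2_coassoc E2_rTensor_D2 E2_lTensor_D2 hgf hfh
  have := LinearMap.congr_fun key (a ⊗ₜ[k] b)
  simp only [hT, hN, hm, LinearMap.comp_apply, LinearEquiv.coe_coe, TensorProduct.comm_tmul,
    TensorProduct.map_tmul, LinearMap.mul'_apply] at this
  exact this.symm

end HopfBasic
end GaugeAux

noncomputable section TwistAux
open TensorProduct LinearMap

variable {k : Type*} [Field k] {A : Type*} [Ring A] [HopfAlgebra k A]

local notation "Δ" => Coalgebra.comul (R := k) (A := A)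
local notation "ε" => Coalgebra.counit (R := k) (A := A)
local notation "S" => HopfAlgebra.antipode (R := k) (A := A)

variable (k A) in
noncomputable def rhoR : A ⊗[k] A →ₗ[k] A :=
  (TensorProduct.rid k A).toLinearMap ∘ₗ TensorProduct.map LinearMap.id Coalgebra.counit

variable (k A) in
noncomputable def rhoL : A ⊗[k] A →ₗ[k] A :=
  (TensorProduct.lid k A).toLinearMap ∘ₗ TensorProduct.map Coalgebra.counit LinearMap.id

@[simp] theorem rhoR_tmul (a b : A) : rhoR k A (a ⊗ₜ[k] b) = ε b • a := rfl
@[simp] theorem rhoL_tmul (a b : A) : rhoL k A (a ⊗ₜ[k] b) = ε a • b := rfl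

theorem rhoR_mul (u v : A ⊗[k] A) : rhoR k A (u * v) = rhoR k A u * rhoR k A v := by
  induction u using TensorProduct.induction_on with
  | zero => simp
  | tmul a b =>
    induction v using TensorProduct.induction_on with
    | zero => simp
    | tmul c d =>
      simp [Algebra.TensorProduct.tmul_mul_tmul, smul_mul_smul_comm, smul_smul, mul_comm]
    | add x y hx hy => simp only [mul_add, map_add, hx, hy]
  | add x y hx hy => simp only [add_mul, map_add, hx, hy]

theorem rhoL_mul (u v : A ⊗[k] A) : rhoL k A (u * v) = rhoL k A u * rhoL k A v := by
  induction u using TensorProduct.induction_on with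
  | zero => simp
  | tmul a b =>
    induction v using TensorProduct.induction_on with
    | zero => simp
    | tmul c d =>
      simp [Algebra.TensorProduct.tmul_mul_tmul, smul_mul_smul_comm, smul_smul, mul_comm]
    | add x y hx hy => simp only [mul_add, map_add, hx, hy]
  | add x y hx hy => simp only [add_mul, map_add, hx, hy]

variable (t : NormalizedTwist k A)

theorem rhoL_J : rhoL k A t.J = 1 := t.counit_id
theorem rhoR_J : rhoR k A t.J = 1 := t.id_counit

theorem rhoR_Jinv : rhoR k A t.Jinv = 1 := by
  have h := rhoR_mul t.Jinv t.J
  rw [t.inv_mul, rhoR_J] at h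
  have h1 : rhoR k A (1 : A ⊗[k] A) = 1 := by
    rw [Algebra.TensorProduct.one_def]; simp
  rw [h1, mul_one] at h
  exact h.symm

/-- The key cocycle computation: `Q_J⁻¹ Q_J = 1`. -/
theorem QJinv_mul_QJ : t.QJinv * t.QJ = 1 := by
  set asc := Algebra.TensorProduct.assoc k k k A A A with hasc
  set DL : A ⊗[k] A →ₗ[k] (A ⊗[k] A) ⊗[k] A :=
    TensorProduct.map Coalgebra.comul LinearMap.id with hDL
  set DR : A ⊗[k] A →ₗ[k] A ⊗[k] (A ⊗[k] A) :=
    TensorProduct.map LinearMap.id Coalgebra.comul with hDR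
  have DLmul : ∀ u v : A ⊗[k] A, DL (u * v) = DL u * DL v :=
    GaugeAux.map_mul_of _ _ (fun x y => Bialgebra.comul_mul x y) (fun _ _ => rfl)
  have DRmul : ∀ u v : A ⊗[k] A, DR (u * v) = DR u * DR v :=
    GaugeAux.map_mul_of _ _ (fun _ _ => rfl) (fun x y => Bialgebra.comul_mul x y)
  have DLone : DL 1 = 1 := by
    rw [Algebra.TensorProduct.one_def]
    simp [hDL, Algebra.TensorProduct.one_def]
  have DRone : DR 1 = 1 := by
    rw [Algebra.TensorProduct.one_def]
    simp [hDR, Algebra.TensorProduct.one_def]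
  set X : (A ⊗[k] A) ⊗[k] A := asc.symm ((1 : A) ⊗ₜ[k] t.J) * (t.Jinv ⊗ₜ[k] (1 : A)) with hX
  set Y : (A ⊗[k] A) ⊗[k] A := asc.symm (DR t.Jinv) * DL t.J with hY
  -- X = Y
  have h1 : asc.symm (DR t.J) * X = DL t.J := by
    rw [hX, ← mul_assoc, ← map_mul, t.cocycle.symm]
    rw [AlgEquiv.symm_apply_apply, mul_assoc, Algebra.TensorProduct.tmul_mul_tmul,
      t.mul_inv, one_mul]
    rw [← Algebra.TensorProduct.one_def, mul_one]
  have h2 : asc.symm (DR t.Jinv) * asc.symm (DR t.J) = 1 := by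
    rw [← map_mul, ← DRmul, t.inv_mul, DRone, map_one]
  have hXY : X = Y := by
    calc X = 1 * X := (one_mul X).symm
      _ = (asc.symm (DR t.Jinv) * asc.symm (DR t.J)) * X := by rw [h2]
      _ = asc.symm (DR t.Jinv) * (asc.symm (DR t.J) * X) := by rw [mul_assoc]
      _ = Y := by rw [h1, hY]
  -- the evaluation map μ
  set mu : (A ⊗[k] A) ⊗[k] A →ₗ[k] A :=
    LinearMap.mul' k A ∘ₗ TensorProduct.map (thetaS k A) LinearMap.id with hmu
  have mu_tmul : ∀ (u : A ⊗[k] A) (z : A), mu (u ⊗ₜ[k] z) = thetaS k A u * z := by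
    intro u z; rfl
  -- μ X = Q_J⁻¹ * Q_J
  have muX : ∀ u v : A ⊗[k] A,
      mu (asc.symm ((1 : A) ⊗ₜ[k] u) * (v ⊗ₜ[k] (1 : A))) = thetaS k A v * phiS k A u := by
    intro u v
    induction u using TensorProduct.induction_on with
    | zero => simp [TensorProduct.tmul_zero]
    | tmul e h =>
      induction v using TensorProduct.induction_on with
      | zero => simp [TensorProduct.zero_tmul]
      | tmul f g =>
        rw [Algebra.TensorProduct.assoc_symm_tmul, Algebra.TensorProduct.tmul_mul_tmul,
          Algebra.TensorProduct.tmul_mul_tmul, mu_tmul]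
        simp [antipode_mul_rev, mul_assoc]
      | add v₁ v₂ h1' h2' =>
        simp only [TensorProduct.add_tmul, add_mul, mul_add, map_add, h1', h2',
          LinearMap.add_apply]
    | add u₁ u₂ h1' h2' =>
      simp only [TensorProduct.tmul_add, map_add, mul_add, add_mul, h1', h2']
  -- μ Y = 1
  have muE : ∀ (c d : A) (p q : A ⊗[k] A),
      mu (asc.symm (c ⊗ₜ[k] p) * (q ⊗ₜ[k] d))
        = c * (thetaS k A q * (phiS k A p * d)) := by
    intro c d p q
    induction p using TensorProduct.induction_on with
    | zero => simp [TensorProduct.tmul_zero]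
    | tmul y z =>
      induction q using TensorProduct.induction_on with
      | zero => simp [TensorProduct.zero_tmul]
      | tmul u w =>
        rw [Algebra.TensorProduct.assoc_symm_tmul, Algebra.TensorProduct.tmul_mul_tmul,
          Algebra.TensorProduct.tmul_mul_tmul, mu_tmul]
        simp [antipode_mul_rev, mul_assoc]
      | add q₁ q₂ h1' h2' =>
        simp only [TensorProduct.add_tmul, add_mul, map_add, h1', h2', mul_add]
    | add p₁ p₂ h1' h2' =>
      simp only [TensorProduct.tmul_add, map_add, mul_add, add_mul, h1', h2']
  have muY : ∀ u v : A ⊗[k] A,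
      mu (asc.symm (DR u) * DL v) = rhoR k A u * rhoL k A v := by
    intro u v
    induction u using TensorProduct.induction_on with
    | zero => simp
    | tmul f g =>
      induction v using TensorProduct.induction_on with
      | zero => simp
      | tmul e h =>
        have e1 : DR (f ⊗ₜ[k] g) = f ⊗ₜ[k] (Δ g) := rfl
        have e2 : DL (e ⊗ₜ[k] h) = (Δ e) ⊗ₜ[k] h := rfl
        rw [e1, e2, muE, thetaS_comul, phiS_comul]
        simp [smul_mul_assoc, mul_smul_comm, smul_smul, mul_comm]
      | add v₁ v₂ h1' h2' =>
        simp only [map_add, mul_add, add_mul, h1', h2']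
    | add u₁ u₂ h1' h2' =>
      simp only [map_add, mul_add, add_mul, h1', h2']
  have eQ : t.QJinv * t.QJ = mu X := by
    rw [hX, muX]
    rfl
  rw [eQ, hXY, hY, muY, rhoR_Jinv, rhoL_J, one_mul]

theorem QJ_mul_QJinv [FiniteDimensional k A] : t.QJ * t.QJinv = 1 := by
  have h := QJinv_mul_QJ t
  have hs : Function.Surjective (LinearMap.mulLeft k t.QJinv) := by
    intro y
    exact ⟨t.QJ * y, by simp [LinearMap.mulLeft_apply, ← mul_assoc, h]⟩
  have hi : Function.Injective (LinearMap.mulLeft k t.QJinv) :=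
    (LinearMap.injective_iff_surjective).mpr hs
  apply hi
  simp only [LinearMap.mulLeft_apply]
  rw [← mul_assoc, h, one_mul, mul_one]

theorem Gmap_mul_rev (u v : A ⊗[k] A) :
    Gmap k A (u * v) = Gmap k A v ∘ₗ Gmap k A u := by
  induction u using TensorProduct.induction_on with
  | zero => simp
  | tmul x y =>
    induction v using TensorProduct.induction_on with
    | zero => simp
    | tmul p q =>
      apply LinearMap.ext; intro b
      rw [Algebra.TensorProduct.tmul_mul_tmul]
      simp [antipode_mul_rev, mul_assoc]
    | add v₁ v₂ h1 h2 =>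
      apply LinearMap.ext; intro b
      have := LinearMap.congr_fun h1 b
      have := LinearMap.congr_fun h2 b
      simp only [mul_add, map_add, LinearMap.add_apply, LinearMap.comp_apply] at *
      simp_all
  | add u₁ u₂ h1 h2 =>
    apply LinearMap.ext; intro b
    have e1 := LinearMap.congr_fun h1 b
    have e2 := LinearMap.congr_fun h2 b
    simp only [add_mul, map_add, LinearMap.add_apply, LinearMap.comp_apply] at *
    simp_all

theorem Gmap_one_apply (b : A) : Gmap k A (1 : A ⊗[k] A) b = b := by
  rw [Algebra.TensorProduct.one_def]
  simp [my_antipode_one]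

theorem mulSJ (w : A ⊗[k] A) :
    LinearMap.mul' k A (TensorProduct.map t.SJ LinearMap.id w)
      = t.QJinv * Gmap k A w t.QJ := by
  induction w using TensorProduct.induction_on with
  | zero => simp
  | tmul x y =>
    simp only [TensorProduct.map_tmul, LinearMap.mul'_apply, Gmap_tmul_apply,
      NormalizedTwist.SJ, LinearMap.comp_apply, LinearMap.mulLeft_apply,
      LinearMap.mulRight_apply, LinearMap.id_coe, id_eq]
    simp [mul_assoc]
  | add u v hu hv => simp only [map_add, hu, hv, LinearMap.add_apply, map_add, mul_add]

/-- The twisted antipode is a left antipode for the twisted comultiplication. -/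
theorem SJ_left_antipode (x : A) :
    LinearMap.mul' k A (TensorProduct.map t.SJ LinearMap.id (t.comulJ x))
      = ε x • (1 : A) := by
  have hc : t.comulJ x = t.Jinv * ((Δ x) * t.J) := by
    simp [NormalizedTwist.comulJ]
  rw [mulSJ, hc, Gmap_mul_rev, Gmap_mul_rev]
  have hQJ : t.QJ = Gmap k A t.J 1 := by rw [Gmap_apply_one]; rfl
  have step1 : Gmap k A t.Jinv t.QJ = 1 := by
    rw [hQJ, ← LinearMap.comp_apply, ← Gmap_mul_rev, t.mul_inv, Gmap_one_apply]
  simp only [LinearMap.comp_apply]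
  rw [step1]
  have step2 : Gmap k A (Δ x) 1 = ε x • (1 : A) := by
    rw [Gmap_apply_one, phiS_comul]
  rw [step2, map_smul, ← hQJ, mul_smul_comm, QJinv_mul_QJ]
end TwistAux


noncomputable section FmapAux
open TensorProduct LinearMap

variable {k : Type*} [Field k] {A : Type*} [Ring A] [HopfAlgebra k A]

local notation "Δ" => Coalgebra.comul (R := k) (A := A)
local notation "ε" => Coalgebra.counit (R := k) (A := A)
local notation "S" => HopfAlgebra.antipode (R := k) (A := A)

variable (k A) in
/-- `Fmap S' (x ⊗ y) : b ↦ x b S'(y)`. -/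
noncomputable def Fmap (S' : A →ₗ[k] A) : A ⊗[k] A →ₗ[k] Module.End k A :=
  TensorProduct.lift (LinearMap.mk₂ k
    (fun x y => LinearMap.mulLeft k x ∘ₗ LinearMap.mulRight k (S' y))
    (fun x x' y => by ext b; simp [add_mul])
    (fun c x y => by ext b; simp [smul_mul_assoc])
    (fun x y y' => by ext b; simp [mul_add])
    (fun c x y => by ext b; simp [mul_smul_comm]))

@[simp] theorem Fmap_tmul_apply (S' : A →ₗ[k] A) (x y b : A) :
    Fmap k A S' (x ⊗ₜ[k] y) b = x * (b * S' y) := rfl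

theorem adGen_eq_Fmap (D : A →ₗ[k] A ⊗[k] A) (S' : A →ₗ[k] A) (a : A) :
    adGen k A D S' a = Fmap k A S' (D a) := rfl

theorem Fmap_mul (u v : A ⊗[k] A) :
    Fmap k A (HopfAlgebra.antipode (R := k)) (u * v)
      = Fmap k A (HopfAlgebra.antipode (R := k)) u * Fmap k A (HopfAlgebra.antipode (R := k)) v := by
  induction u using TensorProduct.induction_on with
  | zero => simp
  | tmul x y =>
    induction v using TensorProduct.induction_on with
    | zero => simp
    | tmul p q =>
      apply LinearMap.ext; intro b
      rw [Algebra.TensorProduct.tmul_mul_tmul]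
      simp only [Fmap_tmul_apply, Module.End.mul_apply]
      simp [antipode_mul_rev, mul_assoc]
    | add v₁ v₂ h1 h2 =>
      apply LinearMap.ext; intro b
      have e1 := LinearMap.congr_fun h1 b
      have e2 := LinearMap.congr_fun h2 b
      simp only [mul_add, map_add, LinearMap.add_apply, Module.End.mul_apply] at *
      simp_all
  | add u₁ u₂ h1 h2 =>
    apply LinearMap.ext; intro b
    have e1 := LinearMap.congr_fun h1 b
    have e2 := LinearMap.congr_fun h2 b
    simp only [add_mul, map_add, LinearMap.add_apply, Module.End.mul_apply] at *
    simp_all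

theorem Fmap_one : Fmap k A (HopfAlgebra.antipode (R := k)) (1 : A ⊗[k] A) = 1 := by
  apply LinearMap.ext; intro b
  rw [Algebra.TensorProduct.one_def]
  simp [my_antipode_one]

variable (t : NormalizedTwist k A)

theorem Fmap_SJ (w : A ⊗[k] A) :
    Fmap k A t.SJ w
      = LinearMap.mulRight k t.QJ ∘ₗ Fmap k A (HopfAlgebra.antipode (R := k)) w
          ∘ₗ LinearMap.mulRight k t.QJinv := by
  induction w using TensorProduct.induction_on with
  | zero => simp
  | tmul x y =>
    apply LinearMap.ext; intro b
    simp only [Fmap_tmul_apply, LinearMap.comp_apply, LinearMap.mulRight_apply,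
      NormalizedTwist.SJ, LinearMap.mulLeft_apply]
    simp [mul_assoc]
  | add u v hu hv =>
    apply LinearMap.ext; intro b
    have e1 := LinearMap.congr_fun hu b
    have e2 := LinearMap.congr_fun hv b
    simp only [map_add, LinearMap.add_apply, LinearMap.comp_apply] at *
    simp_all

variable [FiniteDimensional k A]

theorem trace_Fmap_SJ (w : A ⊗[k] A) :
    LinearMap.trace k A (Fmap k A t.SJ w)
      = LinearMap.trace k A (Fmap k A (HopfAlgebra.antipode (R := k)) w) := by
  rw [Fmap_SJ]
  have : LinearMap.mulRight k t.QJ ∘ₗ Fmap k A (HopfAlgebra.antipode (R := k)) w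
          ∘ₗ LinearMap.mulRight k t.QJinv
      = LinearMap.mulRight k t.QJ * (Fmap k A (HopfAlgebra.antipode (R := k)) w
          * LinearMap.mulRight k t.QJinv) := rfl
  rw [this, LinearMap.trace_mul_comm, mul_assoc]
  have e2 : LinearMap.mulRight k t.QJinv * LinearMap.mulRight k t.QJ
      = (1 : Module.End k A) := by
    apply LinearMap.ext; intro b
    simp only [Module.End.mul_apply, LinearMap.mulRight_apply, Module.End.one_apply]
    rw [mul_assoc, QJ_mul_QJinv, mul_one]
  rw [e2, mul_one]

theorem trace_Fmap_conj (w : A ⊗[k] A) :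
    LinearMap.trace k A (Fmap k A (HopfAlgebra.antipode (R := k)) (t.Jinv * (w * t.J)))
      = LinearMap.trace k A (Fmap k A (HopfAlgebra.antipode (R := k)) w) := by
  rw [Fmap_mul, Fmap_mul, LinearMap.trace_mul_comm, mul_assoc, ← Fmap_mul, t.mul_inv,
    Fmap_one, mul_one]

/-- The key twist-invariance: the trace of the adjoint representation is unchanged
under twisting. -/
theorem trace_adGen_twist (a : A) :
    LinearMap.trace k A (adGen k A t.comulJ t.SJ a)
      = LinearMap.trace k A
          (adGen k A Coalgebra.comul (HopfAlgebra.antipode (R := k)) a) := by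
  rw [adGen_eq_Fmap, adGen_eq_Fmap, trace_Fmap_SJ]
  have hc : t.comulJ a = t.Jinv * ((Δ a) * t.J) := by
    simp [NormalizedTwist.comulJ]
  rw [hc, trace_Fmap_conj]
end FmapAux


noncomputable section GaugeFinal
open TensorProduct LinearMap

variable {k : Type*} [Field k] {A : Type*} [Ring A] [HopfAlgebra k A]
variable {A' : Type*} [Ring A'] [HopfAlgebra k A']

theorem sigma_mul' (σ : A' ≃ₐ[k] A) (w : A' ⊗[k] A') :
    LinearMap.mul' k A (TensorProduct.map σ.toLinearMap σ.toLinearMap w)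
      = σ (LinearMap.mul' k A' w) := by
  induction w using TensorProduct.induction_on with
  | zero => simp
  | tmul a b => simp [map_mul]
  | add u v hu hv => simp only [map_add, hu, hv]

theorem sigma_antipode (t : NormalizedTwist k A) (σ : A' ≃ₐ[k] A)
    (hσ : IsGaugeIso k A A' t σ) :
    σ.toLinearMap ∘ₗ HopfAlgebra.antipode (R := k) (A := A')
      = t.SJ ∘ₗ σ.toLinearMap := by
  refine (convl_inv_unique (Coalgebra.comul (R := k) (A := A'))
    (Coalgebra.counit (R := k) (A := A'))
    Coalgebra.coassoc Coalgebra.rTensor_counit_comp_comul Coalgebra.lTensor_counit_comp_comul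
    (f := σ.toLinearMap) ?_ ?_).symm
  · -- convl (SJ ∘ σ) σ = unit
    apply LinearMap.ext; intro x
    have e1 : TensorProduct.map (t.SJ ∘ₗ σ.toLinearMap) σ.toLinearMap
        = TensorProduct.map t.SJ LinearMap.id ∘ₗ
            TensorProduct.map σ.toLinearMap σ.toLinearMap := by
      rw [← TensorProduct.map_comp, LinearMap.id_comp]
    have e2 : TensorProduct.map σ.toLinearMap σ.toLinearMap
        (Coalgebra.comul (R := k) x) = t.comulJ (σ x) := (hσ.comul_comp x).symm
    simp only [convl, LinearMap.comp_apply, e1, e2]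
    rw [SJ_left_antipode, hσ.counit_comp x]
    simp [Algebra.algebraMap_eq_smul_one]
  · -- convl σ (σ ∘ S') = unit
    apply LinearMap.ext; intro x
    have e1 : TensorProduct.map σ.toLinearMap
          (σ.toLinearMap ∘ₗ HopfAlgebra.antipode (R := k) (A := A'))
        = TensorProduct.map σ.toLinearMap σ.toLinearMap ∘ₗ
            TensorProduct.map LinearMap.id (HopfAlgebra.antipode (R := k) (A := A')) := by
      rw [← TensorProduct.map_comp, LinearMap.comp_id]
    simp only [convl, LinearMap.comp_apply, e1]
    rw [sigma_mul']
    have : LinearMap.mul' k A'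
        (TensorProduct.map LinearMap.id (HopfAlgebra.antipode (R := k) (A := A'))
          (Coalgebra.comul (R := k) x))
        = thetaS k A' (Coalgebra.comul (R := k) x) := rfl
    rw [this, thetaS_comul]
    simp [Algebra.algebraMap_eq_smul_one]

theorem Fmap_conj (σ : A' ≃ₐ[k] A) (S'' : A' →ₗ[k] A') (w : A' ⊗[k] A') :
    σ.toLinearMap ∘ₗ Fmap k A' S'' w ∘ₗ σ.symm.toLinearMap
      = Fmap k A (σ.toLinearMap ∘ₗ S'' ∘ₗ σ.symm.toLinearMap)
          (TensorProduct.map σ.toLinearMap σ.toLinearMap w) := by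
  induction w using TensorProduct.induction_on with
  | zero => simp
  | tmul x y =>
    apply LinearMap.ext; intro b
    simp [map_mul]
  | add u v hu hv =>
    apply LinearMap.ext; intro b
    have e1 := LinearMap.congr_fun hu b
    have e2 := LinearMap.congr_fun hv b
    simp only [map_add, LinearMap.add_apply, LinearMap.comp_apply] at *
    simp_all

variable [FiniteDimensional k A] [FiniteDimensional k A']

theorem trace_ad_gauge (t : NormalizedTwist k A) (σ : A' ≃ₐ[k] A)
    (hσ : IsGaugeIso k A A' t σ) (c : A') :
    LinearMap.trace k A'
        (adGen k A' Coalgebra.comul (HopfAlgebra.antipode (R := k)) c)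
      = LinearMap.trace k A
          (adGen k A Coalgebra.comul (HopfAlgebra.antipode (R := k)) (σ c)) := by
  rw [adGen_eq_Fmap, adGen_eq_Fmap]
  have conj := LinearMap.trace_conj'
    (Fmap k A' (HopfAlgebra.antipode (R := k)) (Coalgebra.comul (R := k) c)) σ.toLinearEquiv
  rw [← conj, LinearEquiv.conj_apply]
  have e0 : (σ.toLinearEquiv : A' →ₗ[k] A) = σ.toLinearMap := rfl
  have e0' : (σ.toLinearEquiv.symm : A →ₗ[k] A') = σ.symm.toLinearMap := rfl
  rw [e0, e0', LinearMap.comp_assoc, Fmap_conj]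
  have e1 : σ.toLinearMap ∘ₗ HopfAlgebra.antipode (R := k) (A := A') ∘ₗ σ.symm.toLinearMap
      = t.SJ := by
    rw [← LinearMap.comp_assoc, sigma_antipode t σ hσ, LinearMap.comp_assoc]
    have : σ.toLinearMap ∘ₗ σ.symm.toLinearMap = LinearMap.id := by
      apply LinearMap.ext; intro b; simp
    rw [this, LinearMap.comp_id]
  rw [e1, ← hσ.comul_comp c, trace_Fmap_SJ]
  have hc : t.comulJ (σ c) = t.Jinv * ((Coalgebra.comul (R := k) (σ c)) * t.J) := by
    simp [NormalizedTwist.comulJ]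
  rw [hc, trace_Fmap_conj]
end GaugeFinal


/-- Corollary 5.5. Let `A` and `A'` be gauge equivalent
finite-dimensional Hopf algebras. Then `dim_k(A'^⊥) = dim_k(A^⊥)`: the dimension of the
Killing radical is a gauge invariant of `A`. -/
theorem killing_radical_dim_gauge_invariant
    (k : Type*) [Field k] (A : Type*) [Ring A] [HopfAlgebra k A] [FiniteDimensional k A]
    (A' : Type*) [Ring A'] [HopfAlgebra k A'] [FiniteDimensional k A']
    (t : NormalizedTwist k A) (σ : A' ≃ₐ[k] A) (hσ : IsGaugeIso k A A' t σ) :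
    Module.finrank k
        (killingRad k A' (Coalgebra.comul (R := k)) (HopfAlgebra.antipode (R := k)))
      = Module.finrank k
          (killingRad k A (Coalgebra.comul (R := k)) (HopfAlgebra.antipode (R := k))) := by
  classical
  have KF : ∀ a b : A',
      killingForm' k A' (Coalgebra.comul (R := k)) (HopfAlgebra.antipode (R := k)) a b
        = killingForm' k A (Coalgebra.comul (R := k)) (HopfAlgebra.antipode (R := k))
            (σ a) (σ b) := by
    intro a b
    unfold killingForm'
    rw [trace_ad_gauge t σ hσ (a * b), map_mul]
  have memA : ∀ a : A, a ∈ killingRad k A (Coalgebra.comul (R := k))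
        (HopfAlgebra.antipode (R := k)) ↔
      ∀ b, killingForm' k A (Coalgebra.comul (R := k)) (HopfAlgebra.antipode (R := k)) a b
        = 0 := fun _ => Iff.rfl
  have memA' : ∀ a : A', a ∈ killingRad k A' (Coalgebra.comul (R := k))
        (HopfAlgebra.antipode (R := k)) ↔
      ∀ b, killingForm' k A' (Coalgebra.comul (R := k)) (HopfAlgebra.antipode (R := k)) a b
        = 0 := fun _ => Iff.rfl
  have hrad : killingRad k A' (Coalgebra.comul (R := k)) (HopfAlgebra.antipode (R := k))
      = Submodule.comap σ.toLinearMap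
          (killingRad k A (Coalgebra.comul (R := k)) (HopfAlgebra.antipode (R := k))) := by
    ext a
    rw [Submodule.mem_comap, memA', memA]
    constructor
    · intro h b
      have := h (σ.symm b)
      rw [KF] at this
      simpa using this
    · intro h b'
      rw [KF]
      exact h (σ b')
  have hmap : Submodule.map σ.toLinearMap
        (killingRad k A' (Coalgebra.comul (R := k)) (HopfAlgebra.antipode (R := k)))
      = killingRad k A (Coalgebra.comul (R := k)) (HopfAlgebra.antipode (R := k)) := by
    rw [hrad]
    exact Submodule.map_comap_eq_of_surjective σ.surjective _
  have hfin := LinearEquiv.finrank_map_eq (R := k) σ.toLinearEquiv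
    (killingRad k A' (Coalgebra.comul (R := k)) (HopfAlgebra.antipode (R := k)))
  have e : (σ.toLinearEquiv : A' →ₗ[k] A) = σ.toLinearMap := rfl
  rw [e, hmap] at hfin
  exact hfin.symm
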